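/- Define a(x) = (1 - 1/x - (ln x)/x) / (ln x)² for x > 1. Then lim_{x→1⁺} a(x) = 1/2 and a is strictly monotone decreasing on (1, ∞); consequently a(x) < 1/2 for all x > 1. -/

import Mathlib

open Real Set Filter

lemma key_ineq : ∀ x > 1, (Real.log x)^2 + 2*Real.log x - 2*(x-1) < 0 := by
  have h : StrictAntiOn (fun x : ℝ => (Real.log x)^2 + 2*Real.log x - 2*(x-1)) (Ici 1) := by
    apply strictAntiOn_of_deriv_neg (convex_Ici 1)
    · apply ContinuousOn.sub
      apply ContinuousOn.add
      · exact (Real.continuousOn_log.mono (by intro z hz; simp at hz ⊢; linarith)).pow 2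
      · exact (Real.continuousOn_log.mono (by intro z hz; simp at hz ⊢; linarith)).const_smul 2 |>.congr (by intro z hz; simp [smul_eq_mul])
      · fun_prop
    · intro x hx
      rw [interior_Ici] at hx
      have hx1 : (1:ℝ) < x := hx
      have hx0 : x ≠ 0 := by linarith
      have hd : HasDerivAt (fun x : ℝ => (Real.log x)^2 + 2*Real.log x - 2*(x-1))
          (2 * Real.log x ^ 1 * x⁻¹ + 2 * x⁻¹ - 2 * 1) x := by
        have h1 := (Real.hasDerivAt_log hx0).pow 2
        have h2 := (Real.hasDerivAt_log hx0).const_mul 2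
        have h3 := ((hasDerivAt_id x).sub_const 1).const_mul 2
        exact ((h1.add h2).sub h3).congr_deriv (by norm_num)
      rw [hd.deriv]
      have hl : Real.log x < x - 1 := Real.log_lt_sub_one_of_pos (by linarith) (by linarith)
      have hxi : x * x⁻¹ = 1 := mul_inv_cancel₀ hx0
      have hip : (0:ℝ) < x⁻¹ := by positivity
      nlinarith [mul_pos hip hip]
  intro x hx
  have := h (self_mem_Ici) (le_of_lt hx : (1:ℝ) ≤ x) hx
  simpa using this


lemma F_anti : StrictAntiOn (fun x : ℝ => (x - 1 - Real.log x) / (x * (Real.log x)^2)) (Ioi 1) := by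
  apply strictAntiOn_of_deriv_neg (convex_Ioi 1)
  · apply ContinuousOn.div
    · exact (continuousOn_id.sub continuousOn_const).sub
        (Real.continuousOn_log.mono (by intro z hz; simp at hz ⊢; linarith))
    · exact continuousOn_id.mul ((Real.continuousOn_log.mono (by intro z hz; simp at hz ⊢; linarith)).pow 2)
    · intro z hz
      have hz1 : (1:ℝ) < z := hz
      have hL : 0 < Real.log z := Real.log_pos hz1
      positivity
  · intro x hx
    rw [interior_Ioi] at hx
    have hx1 : (1:ℝ) < x := hx
    have hx0 : x ≠ 0 := by linarith
    have hL : 0 < Real.log x := Real.log_pos hx1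
    have hv0 : x * (Real.log x)^2 ≠ 0 := by positivity
    have hu : HasDerivAt (fun x : ℝ => x - 1 - Real.log x) (1 - x⁻¹) x := by
      exact ((hasDerivAt_id x).sub_const 1).sub (Real.hasDerivAt_log hx0)
    have hv : HasDerivAt (fun x : ℝ => x * (Real.log x)^2)
        (1 * (Real.log x)^2 + x * (2 * Real.log x ^ 1 * x⁻¹)) x :=
      (hasDerivAt_id x).mul ((Real.hasDerivAt_log hx0).pow 2)
    have hd : HasDerivAt (fun x : ℝ => (x - 1 - Real.log x) / (x * (Real.log x)^2)) _ x := hu.div hv hv0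
    rw [hd.deriv]
    apply div_neg_of_neg_of_pos
    · have heq : (1 - x⁻¹) * (x * Real.log x ^ 2) - (x - 1 - Real.log x) *
          (1 * Real.log x ^ 2 + x * (2 * Real.log x ^ 1 * x⁻¹))
          = Real.log x * ((Real.log x)^2 + 2*Real.log x - 2*(x-1)) := by
        field_simp
        ring
      rw [heq]
      exact mul_neg_of_pos_of_neg hL (key_ineq x hx1)
    · positivity


lemma F_lim : Tendsto (fun x : ℝ => (x - 1 - Real.log x) / (x * (Real.log x)^2))
    (nhdsWithin 1 (Set.Ioi 1)) (nhds (1/2)) := by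
  have hdiv2 : Tendsto (fun x : ℝ => (x^2)⁻¹ / (2 * Real.log x * x⁻¹ + 2 * x⁻¹))
      (nhdsWithin 1 (Set.Ioi 1)) (nhds (1/2)) := by
    have hc : ContinuousAt (fun x : ℝ => (x^2)⁻¹ / (2 * Real.log x * x⁻¹ + 2 * x⁻¹)) 1 := by
      apply ContinuousAt.div
      · fun_prop (disch := norm_num)
      · have : ContinuousAt Real.log 1 := Real.continuousAt_log (by norm_num)
        fun_prop (disch := norm_num)
      · simp
    have := (hc.continuousWithinAt (s := Set.Ioi 1)).tendsto
    simpa using this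
  have hdiv1 : Tendsto (fun x : ℝ => (1 - x⁻¹) / ((Real.log x)^2 + 2 * Real.log x))
      (nhdsWithin 1 (Set.Ioi 1)) (nhds (1/2)) := by
    apply HasDerivAt.lhopital_zero_right_on_Ioo (f' := fun x : ℝ => (x^2)⁻¹)
      (g' := fun x : ℝ => 2 * Real.log x * x⁻¹ + 2 * x⁻¹) (b := 2) one_lt_two
    · intro x hx
      have hx0 : x ≠ 0 := by have := hx.1; linarith
      have := hasDerivAt_inv hx0
      have h := (hasDerivAt_const x (1:ℝ)).sub this
      exact h.congr_deriv (by simp)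
    · intro x hx
      have hx0 : x ≠ 0 := by have := hx.1; linarith
      have h1 := (Real.hasDerivAt_log hx0).pow 2
      have h2 := (Real.hasDerivAt_log hx0).const_mul 2
      have h := h1.add h2
      refine h.congr_deriv ?_
      simp
    · intro x hx
      have hL : 0 < Real.log x := Real.log_pos hx.1
      have hx0 : (0:ℝ) < x := by have := hx.1; linarith
      positivity
    · have hc : ContinuousAt (fun x : ℝ => 1 - x⁻¹) 1 := by fun_prop (disch := norm_num)
      have := (hc.continuousWithinAt (s := Set.Ioi 1)).tendsto
      simpa using this
    · have hc : ContinuousAt (fun x : ℝ => (Real.log x)^2 + 2 * Real.log x) 1 := by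
        have : ContinuousAt Real.log 1 := Real.continuousAt_log (by norm_num)
        fun_prop
      have := (hc.continuousWithinAt (s := Set.Ioi 1)).tendsto
      simpa using this
    · exact hdiv2
  apply HasDerivAt.lhopital_zero_right_on_Ioo (f' := fun x : ℝ => 1 - x⁻¹)
    (g' := fun x : ℝ => (Real.log x)^2 + 2 * Real.log x) (b := 2) one_lt_two
  · intro x hx
    have hx0 : x ≠ 0 := by have := hx.1; linarith
    exact ((hasDerivAt_id x).sub_const 1).sub (Real.hasDerivAt_log hx0)
  · intro x hx
    have hx0 : x ≠ 0 := by have := hx.1; linarith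
    have h := (hasDerivAt_id x).mul ((Real.hasDerivAt_log hx0).pow 2)
    refine h.congr_deriv ?_
    have hx0' : x ≠ 0 := by have := hx.1; linarith
    simp only [Pi.pow_apply, id]; field_simp; norm_num; ring
  · intro x hx
    have hL : 0 < Real.log x := Real.log_pos hx.1
    positivity
  · have hc : ContinuousAt (fun x : ℝ => x - 1 - Real.log x) 1 := by
      have : ContinuousAt Real.log 1 := Real.continuousAt_log (by norm_num)
      fun_prop
    have := (hc.continuousWithinAt (s := Set.Ioi 1)).tendsto
    simpa using this
  · have hc : ContinuousAt (fun x : ℝ => x * (Real.log x)^2) 1 := by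
      have : ContinuousAt Real.log 1 := Real.continuousAt_log (by norm_num)
      fun_prop
    have := (hc.continuousWithinAt (s := Set.Ioi 1)).tendsto
    simpa using this
  · exact hdiv1


open Real in
theorem stmt_11 (a : ℝ → ℝ)
    (ha : ∀ x, a x = (1 - 1/x - Real.log x / x) / (Real.log x)^2) :
    Filter.Tendsto a (nhdsWithin 1 (Set.Ioi 1)) (nhds (1/2)) ∧
    StrictAntiOn a (Set.Ioi 1) ∧
    ∀ x > 1, a x < 1/2 := by
  have heq : ∀ z ∈ Set.Ioi (1:ℝ), a z = (z - 1 - Real.log z) / (z * (Real.log z)^2) := by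
    intro z hz
    have hz1 : (1:ℝ) < z := hz
    have hz0 : z ≠ 0 := by linarith
    have hL : Real.log z ≠ 0 := ne_of_gt (Real.log_pos hz1)
    rw [ha z]
    field_simp
  have hlim : Filter.Tendsto a (nhdsWithin 1 (Set.Ioi 1)) (nhds (1/2)) := by
    apply F_lim.congr'
    filter_upwards [self_mem_nhdsWithin] with z hz
    exact (heq z hz).symm
  have hanti : StrictAntiOn a (Set.Ioi 1) := by
    intro x hx y hy hxy
    rw [heq x hx, heq y hy]
    exact F_anti hx hy hxy
  refine ⟨hlim, hanti, fun x hx => ?_⟩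
  set y := (1 + x) / 2 with hy
  have hy1 : (1:ℝ) < y := by simp [hy]; linarith
  have hyx : y < x := by simp [hy]; linarith
  have hle : a y ≤ 1/2 := by
    apply ge_of_tendsto hlim
    filter_upwards [Ioo_mem_nhdsGT_of_mem ⟨le_refl (1:ℝ), hy1⟩] with z hz
    exact le_of_lt (hanti hz.1 hy1 hz.2)
  exact lt_of_lt_of_le (hanti hy1 (lt_trans hy1 hyx) hyx) hle
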